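/- Let n ≥ 1, let x ∈ [0,1]^n, let n_1 = |{i : x_i ≤ 1/2}| and n_2 = n − n_1, and let α = (2 n_1 n_2 + n_2²)/(n_1² + n_2² + 4 n_1 n_2). Then for every point p ∈ [0,1], α·p + (1 − α)·(1 − p) ≥ |{i : x_i = p}|/(2n). That is, Mechanism 2, which places the facility at 0 with probability α and at 1 with probability 1 − α, satisfies 2-UFS in expectation: every group of agents at a common location p has expected distance from the facility at least (group size)/(2n). -/

import Mathlib

set_option maxHeartbeats 1000000


open Classical in
/-- Mechanism 2 of Cheng, Yu and Zhang (2013), which places the facility at 0 with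
probability α = (2n₁n₂ + n₂²)/(n₁² + n₂² + 4n₁n₂) and at 1 with probability 1 - α,
satisfies 2-UFS in expectation. -/
theorem mechanism_two_satisfies_two_UFS (n : ℕ) (hn : 1 ≤ n) (x : Fin n → ℝ)
    (hx : ∀ i, x i ∈ Set.Icc (0:ℝ) 1) :
    ∀ p ∈ Set.Icc (0:ℝ) 1,
      letI n1 : ℕ := (Finset.univ.filter (fun i => x i ≤ 1/2)).card
      letI n2 : ℕ := n - n1
      letI α : ℝ := (2*n1*n2 + (n2:ℝ)^2) / ((n1:ℝ)^2 + (n2:ℝ)^2 + 4*n1*n2)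
      ((Finset.univ.filter (fun i => x i = p)).card : ℝ) / (2*n) ≤
        α * p + (1 - α) * (1 - p) := by
  intro p hp
  obtain ⟨hp0, hp1⟩ := hp
  set N1 : ℕ := (Finset.univ.filter (fun i => x i ≤ 1/2)).card with hN1
  have hle : N1 ≤ n := (Finset.card_filter_le _ _).trans (by simp)
  set a : ℝ := (N1:ℝ) with ha'
  set b : ℝ := ((n - N1 : ℕ):ℝ) with hb'
  have hab : a + b = n := by
    rw [ha', hb']
    rw [Nat.cast_sub hle]; ring
  have ha : 0 ≤ a := Nat.cast_nonneg _
  have hb : 0 ≤ b := Nat.cast_nonneg _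
  have hnpos : (0:ℝ) < n := by exact_mod_cast hn
  have hD : (0:ℝ) < a^2 + b^2 + 4*a*b := by
    rcases Nat.eq_zero_or_pos N1 with h1 | h1
    · have h2 : 0 < n - N1 := by omega
      have hb2 : 0 < b := by rw [hb']; exact_mod_cast h2
      nlinarith
    · have ha2 : 0 < a := by rw [ha']; exact Nat.cast_pos.mpr h1
      nlinarith
  set k : ℝ := ((Finset.univ.filter (fun i => x i = p)).card : ℝ) with hk'
  have hk0 : 0 ≤ k := Nat.cast_nonneg _
  show k / (2*(n:ℝ)) ≤ (2*a*b + b^2)/(a^2+b^2+4*a*b) * p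
      + (1 - (2*a*b + b^2)/(a^2+b^2+4*a*b)) * (1-p)
  have h1α : 1 - (2*a*b + b^2)/(a^2+b^2+4*a*b) = (a^2+2*a*b)/(a^2+b^2+4*a*b) := by
    rw [eq_div_iff hD.ne', sub_mul, div_mul_cancel₀ _ hD.ne']
    ring
  rw [h1α, div_mul_eq_mul_div, div_mul_eq_mul_div, ← add_div,
    div_le_div_iff₀ (by positivity) hD]
  rw [← hab]
  by_cases hhalf : p ≤ 1/2
  · -- all agents at p counted in n1, so k ≤ a
    have hka : k ≤ a := by
      rw [hk', ha', hN1]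
      exact_mod_cast Finset.card_le_card (by
        intro i hi
        simp only [Finset.mem_filter, Finset.mem_univ, true_and] at hi ⊢
        rw [hi]; exact hhalf)
    have t1 : (0:ℝ) ≤ (1 - 2*p) * (a*(a^2+2*a*b+3*b^2)) :=
      mul_nonneg (by linarith) (mul_nonneg ha (by nlinarith))
    have t2 : (0:ℝ) ≤ (2*p) * (b*(a^2+b^2+4*a*b)) :=
      mul_nonneg (by linarith) (mul_nonneg hb hD.le)
    have t3 : (0:ℝ) ≤ (a - k) * (a^2+b^2+4*a*b) :=
      mul_nonneg (by linarith) hD.le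
    linarith [t1, t2, t3]
  · -- all agents at p counted in n2, so k ≤ b
    push_neg at hhalf
    have hkb : k ≤ b := by
      have hsub : (Finset.univ.filter (fun i => x i = p))
          ⊆ (Finset.univ.filter (fun i => ¬ x i ≤ 1/2)) := by
        intro i hi
        simp only [Finset.mem_filter, Finset.mem_univ, true_and] at hi ⊢
        rw [hi]; linarith
      have hcard := Finset.card_le_card hsub
      have heq : (Finset.univ.filter (fun i => ¬ x i ≤ 1/2)).card = n - N1 := by
        have h := Finset.card_filter_add_card_filter_not
          (s := (Finset.univ : Finset (Fin n))) (p := fun i => x i ≤ 1/2)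
        simp only [Finset.card_univ, Fintype.card_fin] at h
        omega
      rw [hk', hb']
      exact_mod_cast heq ▸ hcard
    have t1 : (0:ℝ) ≤ (2 - 2*p) * (a*(a^2+b^2+4*a*b)) :=
      mul_nonneg (by linarith) (mul_nonneg ha hD.le)
    have t2 : (0:ℝ) ≤ (2*p - 1) * (b*(3*a^2+2*a*b+b^2)) :=
      mul_nonneg (by linarith) (mul_nonneg hb (by nlinarith))
    have t3 : (0:ℝ) ≤ (b - k) * (a^2+b^2+4*a*b) :=
      mul_nonneg (by linarith) hD.le
    linarith [t1, t2, t3]
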